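/- Let K : ℝ^d × ℝ^d → ℝ be a bounded Borel measurable symmetric kernel that is Lipschitz with constant C_K > 0, i.e. |K(x,y) − K(x',y')| ≤ C_K(|x − x'| + |y − y'|) for all x, x', y, y' ∈ ℝ^d. Let μ, ν be Borel probability measures on ℝ^d and let T*, T̃ : ℝ^d → ℝ^d be Borel measurable maps with ∫ |T̃(x) − T*(x)| μ(dx) < ∞ and T*♯μ = ν. Then γ²_K(T̃♯μ, ν) ≤ 4 C_K ∫ |T̃(x) − T*(x)| μ(dx). -/
import Mathlib


open MeasureTheory

/-- The squared maximum mean discrepancy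
`γ²_K(μ,ν) = ∫∫ K dμ dμ − 2 ∫∫ K dμ dν + ∫∫ K dν dν`. -/
noncomputable def mmdSq {d : ℕ} (K : EuclideanSpace ℝ (Fin d) → EuclideanSpace ℝ (Fin d) → ℝ)
    (μ ν : Measure (EuclideanSpace ℝ (Fin d))) : ℝ :=
  (∫ x, ∫ y, K x y ∂μ ∂μ) - 2 * (∫ x, ∫ y, K x y ∂ν ∂μ) + ∫ x, ∫ y, K x y ∂ν ∂ν

/-- If `K` is a bounded Borel symmetric kernel, Lipschitz with constant `C_K`, and
`T*♯μ = ν`, then `γ²_K(T̃♯μ, ν) ≤ 4 C_K ∫ ‖T̃ x − T* x‖ μ(dx)`. -/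
theorem stmt_8 (d : ℕ)
    (K : EuclideanSpace ℝ (Fin d) → EuclideanSpace ℝ (Fin d) → ℝ)
    (hKm : Measurable (Function.uncurry K))
    (hKbdd : ∃ C, ∀ x y, |K x y| ≤ C)
    (hKsymm : ∀ x y, K x y = K y x)
    (CK : ℝ) (hCK : 0 < CK)
    (hKlip : ∀ x x' y y', |K x y - K x' y'| ≤ CK * (‖x - x'‖ + ‖y - y'‖))
    (μ ν : Measure (EuclideanSpace ℝ (Fin d)))
    [IsProbabilityMeasure μ] [IsProbabilityMeasure ν]
    (Tstar Ttilde : EuclideanSpace ℝ (Fin d) → EuclideanSpace ℝ (Fin d))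
    (hTstar : Measurable Tstar) (hTtilde : Measurable Ttilde)
    (hdiff : Integrable (fun x => ‖Ttilde x - Tstar x‖) μ)
    (hpush : Measure.map Tstar μ = ν) :
    mmdSq K (Measure.map Ttilde μ) ν ≤ 4 * CK * ∫ x, ‖Ttilde x - Tstar x‖ ∂μ := by
  obtain ⟨C, hC⟩ := hKbdd
  have mK1 : ∀ a, Measurable (fun y => K a y) := fun a => by
    exact hKm.comp' (measurable_const.prodMk measurable_id)
  have intg : ∀ f : EuclideanSpace ℝ (Fin d) → ℝ, Measurable f → (∀ x, |f x| ≤ C) →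
      Integrable f μ := fun f hf hb =>
    (integrable_const C).mono' hf.aestronglyMeasurable
      (ae_of_all _ fun x => by simpa [Real.norm_eq_abs] using hb x)
  set I := ∫ x, ‖Ttilde x - Tstar x‖ ∂μ with hIdef
  have hI0 : 0 ≤ I := integral_nonneg fun x => norm_nonneg _
  have inner_map : ∀ (a : EuclideanSpace ℝ (Fin d)) (S : EuclideanSpace ℝ (Fin d) → EuclideanSpace ℝ (Fin d)), Measurable S →
      (∫ y, K a y ∂(Measure.map S μ)) = ∫ y, K a (S y) ∂μ := fun a S hS =>
    integral_map hS.aemeasurable ((mK1 a).aestronglyMeasurable)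
  set F : EuclideanSpace ℝ (Fin d) → ℝ := fun x => ∫ y, K (Ttilde x) (Ttilde y) ∂μ with hF
  set G : EuclideanSpace ℝ (Fin d) → ℝ := fun x => ∫ y, K (Ttilde x) (Tstar y) ∂μ with hG
  set H : EuclideanSpace ℝ (Fin d) → ℝ := fun x => ∫ y, K (Tstar x) (Tstar y) ∂μ with hH
  have m2 : ∀ (S₁ S₂ : EuclideanSpace ℝ (Fin d) → EuclideanSpace ℝ (Fin d)),
      Measurable S₁ → Measurable S₂ →
      Measurable (fun p : EuclideanSpace ℝ (Fin d) × EuclideanSpace ℝ (Fin d) =>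
        K (S₁ p.1) (S₂ p.2)) := fun S₁ S₂ h₁ h₂ => by
    exact hKm.comp' ((h₁.comp measurable_fst).prodMk (h₂.comp measurable_snd))
  have mF : StronglyMeasurable F := by
    exact (m2 _ _ hTtilde hTtilde).stronglyMeasurable.integral_prod_right'
  have mG : StronglyMeasurable G := by
    exact (m2 _ _ hTtilde hTstar).stronglyMeasurable.integral_prod_right'
  have mH : StronglyMeasurable H := by
    exact (m2 _ _ hTstar hTstar).stronglyMeasurable.integral_prod_right'
  have bound : ∀ (f : EuclideanSpace ℝ (Fin d) → ℝ), (∀ y, |f y| ≤ C) → |∫ y, f y ∂μ| ≤ C := by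
    intro f hb
    have := norm_integral_le_of_norm_le_const (μ := μ) (f := f) (C := C)
      (ae_of_all _ fun y => by simpa [Real.norm_eq_abs] using hb y)
    simpa [Real.norm_eq_abs] using this
  have iF : Integrable F μ := intg F mF.measurable fun x => bound _ fun y => hC _ _
  have iG : Integrable G μ := intg G mG.measurable fun x => bound _ fun y => hC _ _
  have iH : Integrable H μ := intg H mH.measurable fun x => bound _ fun y => hC _ _
  have mS1 : ∀ (S : EuclideanSpace ℝ (Fin d) → EuclideanSpace ℝ (Fin d)), Measurable S →
      StronglyMeasurable (fun x : EuclideanSpace ℝ (Fin d) => ∫ y, K x (S y) ∂μ) :=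
    fun S hS => by
      exact (hKm.comp' (measurable_fst.prodMk
        (hS.comp measurable_snd))).stronglyMeasurable.integral_prod_right'
  have e1 : (∫ x, ∫ y, K x y ∂(Measure.map Ttilde μ) ∂(Measure.map Ttilde μ)) = ∫ x, F x ∂μ := by
    have h : (∫ x, ∫ y, K x y ∂(Measure.map Ttilde μ) ∂(Measure.map Ttilde μ))
        = ∫ x, ∫ y, K x (Ttilde y) ∂μ ∂(Measure.map Ttilde μ) := by
      congr 1; funext a; exact inner_map a Ttilde hTtilde
    rw [h]
    exact integral_map hTtilde.aemeasurable (mS1 Ttilde hTtilde).aestronglyMeasurable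
  have e2 : (∫ x, ∫ y, K x y ∂ν ∂(Measure.map Ttilde μ)) = ∫ x, G x ∂μ := by
    have h : (∫ x, ∫ y, K x y ∂ν ∂(Measure.map Ttilde μ))
        = ∫ x, ∫ y, K x (Tstar y) ∂μ ∂(Measure.map Ttilde μ) := by
      congr 1; funext a; rw [← hpush]; exact inner_map a Tstar hTstar
    rw [h]
    exact integral_map hTtilde.aemeasurable (mS1 Tstar hTstar).aestronglyMeasurable
  have e3 : (∫ x, ∫ y, K x y ∂ν ∂ν) = ∫ x, H x ∂μ := by
    rw [← hpush]
    have h : (∫ x, ∫ y, K x y ∂(Measure.map Tstar μ) ∂(Measure.map Tstar μ))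
        = ∫ x, ∫ y, K x (Tstar y) ∂μ ∂(Measure.map Tstar μ) := by
      congr 1; funext a; exact inner_map a Tstar hTstar
    rw [h]
    exact integral_map hTstar.aemeasurable (mS1 Tstar hTstar).aestronglyMeasurable
  have emmd : mmdSq K (Measure.map Ttilde μ) ν
      = (∫ x, F x ∂μ) - 2 * (∫ x, G x ∂μ) + ∫ x, H x ∂μ := by
    rw [mmdSq, e1, e2, e3]
  rw [emmd]
  have iSlice : ∀ (a : EuclideanSpace ℝ (Fin d))
      (S : EuclideanSpace ℝ (Fin d) → EuclideanSpace ℝ (Fin d)), Measurable S →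
      Integrable (fun y => K a (S y)) μ := fun a S hS =>
    intg _ ((mK1 a).comp hS) (fun y => hC _ _)
  have hFG : ∀ x, F x - G x ≤ CK * I := by
    intro x
    rw [hF, hG]
    rw [← integral_sub (iSlice _ _ hTtilde) (iSlice _ _ hTstar)]
    calc (∫ y, (K (Ttilde x) (Ttilde y) - K (Ttilde x) (Tstar y)) ∂μ)
        ≤ ∫ y, CK * ‖Ttilde y - Tstar y‖ ∂μ := by
          apply integral_mono ((iSlice _ _ hTtilde).sub (iSlice _ _ hTstar))
            (hdiff.const_mul CK)
          intro y
          have h2 := (abs_le.mp (hKlip (Ttilde x) (Ttilde x) (Ttilde y) (Tstar y))).2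
          calc K (Ttilde x) (Ttilde y) - K (Ttilde x) (Tstar y)
              ≤ CK * (‖Ttilde x - Ttilde x‖ + ‖Ttilde y - Tstar y‖) := h2
            _ = CK * ‖Ttilde y - Tstar y‖ := by simp
      _ = CK * I := by rw [integral_const_mul]
  have hHG : ∀ x, H x - G x ≤ CK * ‖Ttilde x - Tstar x‖ := by
    intro x
    rw [hH, hG]
    rw [← integral_sub (iSlice _ _ hTstar) (iSlice _ _ hTstar)]
    calc (∫ y, (K (Tstar x) (Tstar y) - K (Ttilde x) (Tstar y)) ∂μ)
        ≤ ∫ _y, CK * ‖Ttilde x - Tstar x‖ ∂μ := by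
          apply integral_mono ((iSlice _ _ hTstar).sub (iSlice _ _ hTstar))
            (integrable_const _)
          intro y
          have h2 := (abs_le.mp (hKlip (Tstar x) (Ttilde x) (Tstar y) (Tstar y))).2
          calc K (Tstar x) (Tstar y) - K (Ttilde x) (Tstar y)
              ≤ CK * (‖Tstar x - Ttilde x‖ + ‖Tstar y - Tstar y‖) := h2
            _ = CK * ‖Ttilde x - Tstar x‖ := by
                rw [norm_sub_rev]; simp
      _ = CK * ‖Ttilde x - Tstar x‖ := by simp
  have key : (∫ x, F x ∂μ) - 2 * (∫ x, G x ∂μ) + ∫ x, H x ∂μ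
      = (∫ x, (F x - G x) ∂μ) + ∫ x, (H x - G x) ∂μ := by
    rw [integral_sub iF iG, integral_sub iH iG]; ring
  rw [key]
  have h1 : (∫ x, (F x - G x) ∂μ) ≤ CK * I :=
    calc (∫ x, (F x - G x) ∂μ) ≤ ∫ _x, CK * I ∂μ :=
          integral_mono (iF.sub iG) (integrable_const _) hFG
      _ = CK * I := by simp
  have h2 : (∫ x, (H x - G x) ∂μ) ≤ CK * I :=
    calc (∫ x, (H x - G x) ∂μ) ≤ ∫ x, CK * ‖Ttilde x - Tstar x‖ ∂μ :=
          integral_mono (iH.sub iG) (hdiff.const_mul CK) hHG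
      _ = CK * I := by rw [integral_const_mul]
  nlinarith [mul_nonneg hCK.le hI0]
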